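/- Let E be a real Banach space, X̃ ≥ 0 a real number, and F : ℝ → ℝ a function satisfying: (i) F is monotone on [0, X̃] (0 ≤ a ≤ b ≤ X̃ implies F(a) ≤ F(b)); (ii) F(0) ≥ 0; (iii) F(X̃) ≤ X̃; (iv) for every monotone increasing sequence (t_p) in [0, X̃] converging to L, F(t_p) converges to F(L). Let f : E → E satisfy ‖f(0)‖ ≤ F(0), and ‖f(x+h) − f(x)‖ ≤ F(X+H) − F(X) whenever ‖x‖ ≤ X, ‖h‖ ≤ H, 0 ≤ X, 0 ≤ H and X + H ≤ X̃. Define X^(0) = 0, X^(p+1) = F(X^(p)) and x^(0) = 0, x^(p+1) = f(x^(p)). Then (X^(p)) is monotone increasing and converges to some X* ∈ [0, X̃] with F(X*) = X*, and (x^(p)) converges in norm to some x* ∈ E with f(x*) = x* and ‖x*‖ ≤ X*. -/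

import Mathlib

open Filter

/-- Kantorovich's method of successive approximation in a real Banach space with a
real comparison function `F`: the comparison iterates increase to a fixed point
`X* ∈ [0, X̃]` of `F` and the iterates of `f` converge in norm to a fixed point
`x*` of `f` with `‖x*‖ ≤ X*`. -/
theorem stmt_11 {E : Type*} [NormedAddCommGroup E] [NormedSpace ℝ E] [CompleteSpace E]
    (Xt : ℝ) (hXt : 0 ≤ Xt) (F : ℝ → ℝ)
    (hiso : ∀ a b : ℝ, 0 ≤ a → a ≤ b → b ≤ Xt → F a ≤ F b)
    (hF0 : 0 ≤ F 0)
    (hFXt : F Xt ≤ Xt)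
    (hcont : ∀ (t : ℕ → ℝ) (L : ℝ), Monotone t → (∀ p, t p ∈ Set.Icc 0 Xt) →
      Tendsto t atTop (nhds L) → Tendsto (fun p => F (t p)) atTop (nhds (F L)))
    (f : E → E)
    (hf0 : ‖f 0‖ ≤ F 0)
    (hlip : ∀ (x h : E) (X H : ℝ), ‖x‖ ≤ X → ‖h‖ ≤ H → 0 ≤ X → 0 ≤ H →
      X + H ≤ Xt → ‖f (x + h) - f x‖ ≤ F (X + H) - F X) :
    Monotone (fun p => F^[p] 0) ∧
    ∃ Xstar : ℝ, Xstar ∈ Set.Icc 0 Xt ∧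
      Tendsto (fun p => F^[p] 0) atTop (nhds Xstar) ∧ F Xstar = Xstar ∧
      ∃ xstar : E, Tendsto (fun p => f^[p] 0) atTop (nhds xstar) ∧
        f xstar = xstar ∧ ‖xstar‖ ≤ Xstar := by
  set X : ℕ → ℝ := fun p => F^[p] 0 with hXdef
  set x : ℕ → E := fun p => f^[p] 0 with hxdef
  have hX0 : X 0 = 0 := rfl
  have hx0 : x 0 = 0 := rfl
  have hXsucc : ∀ p, X (p + 1) = F (X p) := fun p => Function.iterate_succ_apply' F p 0
  have hxsucc : ∀ p, x (p + 1) = f (x p) := fun p => Function.iterate_succ_apply' f p 0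
  -- Invariant for the comparison sequence
  have key : ∀ p, 0 ≤ X p ∧ X p ≤ X (p + 1) ∧ X (p + 1) ≤ Xt := by
    intro p
    induction p with
    | zero =>
      refine ⟨le_refl 0, ?_, ?_⟩
      · rw [hXsucc, hX0]; exact hF0
      · rw [hXsucc, hX0]
        exact le_trans (hiso 0 Xt le_rfl hXt le_rfl) hFXt
    | succ p ih =>
      obtain ⟨h0, h1, h2⟩ := ih
      have h0' : 0 ≤ X (p + 1) := le_trans h0 h1
      refine ⟨h0', ?_, ?_⟩
      · rw [hXsucc p, hXsucc (p + 1)]; exact hiso _ _ h0 h1 h2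
      · rw [hXsucc (p + 1)]
        exact le_trans (hiso _ _ h0' h2 le_rfl) hFXt
  have hmono : Monotone X := monotone_nat_of_le_succ fun p => (key p).2.1
  have hle : ∀ p, X p ≤ Xt := by
    intro p
    cases p with
    | zero => rw [hX0]; exact hXt
    | succ p => exact (key p).2.2
  have hbdd : BddAbove (Set.range X) := ⟨Xt, by rintro _ ⟨p, rfl⟩; exact hle p⟩
  set Xstar : ℝ := ⨆ p, X p with hXstar
  have hconv : Tendsto X atTop (nhds Xstar) := tendsto_atTop_ciSup hmono hbdd
  have hXleStar : ∀ p, X p ≤ Xstar := fun p => le_ciSup hbdd p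
  have hStar0 : 0 ≤ Xstar := le_trans (le_of_eq hX0.symm) (hXleStar 0)
  have hStarXt : Xstar ≤ Xt := ciSup_le hle
  have hfixX : F Xstar = Xstar := by
    have h1 : Tendsto (fun p => F (X p)) atTop (nhds (F Xstar)) :=
      hcont X Xstar hmono (fun p => ⟨(key p).1, hle p⟩) hconv
    have h2 : Tendsto (fun p => F (X p)) atTop (nhds Xstar) := by
      have h := hconv.comp (tendsto_add_atTop_nat 1)
      simp only [← hXsucc]
      simpa [Function.comp_def] using h
    exact tendsto_nhds_unique h1 h2
  -- Invariant for the iterates of f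
  have key2 : ∀ p, ‖x p‖ ≤ X p ∧ ‖x (p + 1) - x p‖ ≤ X (p + 1) - X p := by
    intro p
    induction p with
    | zero =>
      constructor
      · rw [hx0, hX0]; simp
      · rw [hxsucc, hx0, hXsucc, hX0]; simpa using hf0
    | succ p ih =>
      obtain ⟨h1, h2⟩ := ih
      have hxnorm : ‖x (p + 1)‖ ≤ X (p + 1) := by
        calc ‖x (p + 1)‖ = ‖x p + (x (p + 1) - x p)‖ :=
            congrArg (‖·‖) (by abel)
          _ ≤ ‖x p‖ + ‖x (p + 1) - x p‖ := norm_add_le _ _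
          _ ≤ X p + (X (p + 1) - X p) := add_le_add h1 h2
          _ = X (p + 1) := by ring
      refine ⟨hxnorm, ?_⟩
      have hH : (0:ℝ) ≤ X (p + 1) - X p := by
        have := (key p).2.1; linarith
      have := hlip (x p) (x (p + 1) - x p) (X p) (X (p + 1) - X p) h1 h2 (key p).1 hH
        (by have := (key p).2.2; linarith)
      rw [hxsucc (p + 1), hxsucc p] at *
      have heq : X p + (X (p + 1) - X p) = X (p + 1) := by ring
      rw [heq] at this
      simpa [hXsucc, add_sub_cancel] using this
  -- distances between iterates
  have hpq : ∀ p q, p ≤ q → ‖x q - x p‖ ≤ X q - X p := by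
    intro p q hpq
    induction q, hpq using Nat.le_induction with
    | base => simp
    | succ q hq ih =>
      calc ‖x (q + 1) - x p‖ = ‖(x (q + 1) - x q) + (x q - x p)‖ :=
          congrArg (‖·‖) (by abel)
        _ ≤ ‖x (q + 1) - x q‖ + ‖x q - x p‖ := norm_add_le _ _
        _ ≤ (X (q + 1) - X q) + (X q - X p) := add_le_add (key2 q).2 ih
        _ = X (q + 1) - X p := by ring
  have hcauchy : CauchySeq x := by
    refine cauchySeq_of_le_tendsto_0 (fun N => Xstar - X N) ?_ ?_
    · intro n m N hn hm
      rcases le_total n m with h | h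
      · calc dist (x n) (x m) = ‖x m - x n‖ := by rw [dist_eq_norm, norm_sub_rev]
          _ ≤ X m - X n := hpq n m h
          _ ≤ Xstar - X N := by have := hXleStar m; have := hmono hn; linarith
      · calc dist (x n) (x m) = ‖x n - x m‖ := dist_eq_norm _ _
          _ ≤ X n - X m := hpq m n h
          _ ≤ Xstar - X N := by have := hXleStar n; have := hmono hm; linarith
    · have h : Tendsto (fun N => Xstar - X N) atTop (nhds (Xstar - Xstar)) :=
        tendsto_const_nhds.sub hconv
      simpa using h
  obtain ⟨xstar, hxconv⟩ := cauchySeq_tendsto_of_complete hcauchy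
  have hdiststar : ∀ p, ‖xstar - x p‖ ≤ Xstar - X p := by
    intro p
    have h1 : Tendsto (fun q => ‖x q - x p‖) atTop (nhds ‖xstar - x p‖) :=
      ((hxconv.sub tendsto_const_nhds).norm)
    have h2 : Tendsto (fun q => X q - X p) atTop (nhds (Xstar - X p)) :=
      hconv.sub tendsto_const_nhds
    exact le_of_tendsto_of_tendsto h1 h2
      (eventually_atTop.2 ⟨p, fun q hq => hpq p q hq⟩)
  have hfixpt : ∀ p, ‖f xstar - x (p + 1)‖ ≤ Xstar - X (p + 1) := by
    intro p
    have hH : (0:ℝ) ≤ Xstar - X p := by have := hXleStar p; linarith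
    have := hlip (x p) (xstar - x p) (X p) (Xstar - X p) (key2 p).1 (hdiststar p)
      (key p).1 hH (by linarith)
    have heq : X p + (Xstar - X p) = Xstar := by ring
    rw [heq, hfixX] at this
    rw [hxsucc p]
    calc ‖f xstar - f (x p)‖ = ‖f (x p + (xstar - x p)) - f (x p)‖ := by
          rw [add_sub_cancel]
      _ ≤ Xstar - F (X p) := this
      _ = Xstar - X (p + 1) := by rw [hXsucc]
  have hfx : f xstar = xstar := by
    have h1 : Tendsto (fun p => x (p + 1)) atTop (nhds xstar) := by
      have := hxconv.comp (tendsto_add_atTop_nat 1)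
      simpa [Function.comp_def] using this
    have h2 : Tendsto (fun p => x (p + 1)) atTop (nhds (f xstar)) := by
      rw [tendsto_iff_norm_sub_tendsto_zero]
      have hb : Tendsto (fun p => Xstar - X (p + 1)) atTop (nhds 0) := by
        have := (tendsto_const_nhds (x := Xstar) (f := atTop)).sub
          (hconv.comp (tendsto_add_atTop_nat 1))
        simpa [Function.comp] using this
      refine squeeze_zero (fun p => norm_nonneg _) (fun p => ?_) hb
      rw [norm_sub_rev]
      exact hfixpt p
    exact tendsto_nhds_unique h2 h1
  have hnormstar : ‖xstar‖ ≤ Xstar :=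
    le_of_tendsto_of_tendsto' hxconv.norm hconv fun p => (key2 p).1
  exact ⟨hmono, Xstar, ⟨hStar0, hStarXt⟩, hconv, hfixX, xstar, hxconv, hfx, hnormstar⟩
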